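/- For α, β > 0, ρ > 0 and any a ∈ ℝ, the generalized Mittag-Leffler function satisfies the antiderivative identity: the derivative in τ of −(t−τ)^β E^ρ_{α,β+1}(−a(t−τ)^α) equals (t−τ)^{β−1} E^ρ_{α,β}(−a(t−τ)^α), for 0 < τ < t. -/

import Mathlib

open Real Filter

-- Gamma ratio lower bound
lemma gamma_ratio_lower {α : ℝ} (hα : 0 < α) {x : ℝ} (hx : 2 ≤ x) :
    Real.Gamma x * x ^ min α 1 ≤ 2 * Real.Gamma (x + α) := by
  have hx0 : (0:ℝ) < x := lt_of_lt_of_le two_pos hx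
  have hxa : (0:ℝ) < x + α := by linarith
  have hGx : 0 < Real.Gamma x := Real.Gamma_pos_of_pos hx0
  have hGxa : 0 < Real.Gamma (x + α) := Real.Gamma_pos_of_pos hxa
  by_cases h1 : 1 ≤ α
  · rw [min_eq_right h1, Real.rpow_one]
    have hmono := Real.Gamma_strictMonoOn_Ici.monotoneOn
    have h2 : Real.Gamma (x + 1) ≤ Real.Gamma (x + α) := by
      apply hmono (by simp [Set.mem_Ici]; linarith) (by simp [Set.mem_Ici]; linarith)
      linarith
    rw [Real.Gamma_add_one hx0.ne'] at h2
    nlinarith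
  · push_neg at h1
    rw [min_eq_left h1.le]
    -- convexity bound: Γ(x+1) ≤ Γ(x+α) * (x+α)^(1-α)
    have hconv := Real.convexOn_log_Gamma.2 (Set.mem_Ioi.2 hxa)
      (Set.mem_Ioi.2 (by linarith : (0:ℝ) < x + α + 1)) hα.le (by linarith : (0:ℝ) ≤ 1 - α)
      (by ring)
    have hpt : α • (x + α) + (1 - α) • (x + α + 1) = x + 1 := by
      simp [smul_eq_mul]; ring
    rw [hpt] at hconv
    simp only [Function.comp_apply, smul_eq_mul] at hconv
    rw [Real.Gamma_add_one hxa.ne', Real.log_mul hxa.ne' hGxa.ne'] at hconv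
    have hkey : Real.Gamma (x + 1) ≤ Real.Gamma (x + α) * (x + α) ^ (1 - α) := by
      have h2 : Real.log (Real.Gamma (x + 1)) ≤
          Real.log (Real.Gamma (x + α)) + (1 - α) * Real.log (x + α) := by nlinarith
      have := Real.exp_le_exp.2 h2
      rwa [Real.exp_log (Real.Gamma_pos_of_pos (by linarith)), Real.exp_add,
        Real.exp_log hGxa, mul_comm (1 - α) (Real.log (x + α)),
        ← Real.rpow_def_of_pos hxa] at this
    rw [Real.Gamma_add_one hx0.ne'] at hkey
    have hb : (x + α) ^ (1 - α) ≤ 2 * x ^ (1 - α) := by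
      calc (x + α) ^ (1 - α) ≤ (2 * x) ^ (1 - α) := by
            apply Real.rpow_le_rpow hxa.le (by linarith) (by linarith)
        _ = 2 ^ (1 - α) * x ^ (1 - α) := Real.mul_rpow (by norm_num) hx0.le
        _ ≤ 2 * x ^ (1 - α) := by
            apply mul_le_mul_of_nonneg_right _ (Real.rpow_nonneg hx0.le _)
            calc (2:ℝ) ^ (1 - α) ≤ 2 ^ (1:ℝ) :=
                  Real.rpow_le_rpow_of_exponent_le (by norm_num) (by linarith)
              _ = 2 := Real.rpow_one 2
    have hchain : x * Real.Gamma x ≤ 2 * Real.Gamma (x + α) * x ^ (1 - α) := by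
      calc x * Real.Gamma x ≤ Real.Gamma (x + α) * (x + α) ^ (1 - α) := hkey
        _ ≤ Real.Gamma (x + α) * (2 * x ^ (1 - α)) :=
            mul_le_mul_of_nonneg_left hb hGxa.le
        _ = 2 * Real.Gamma (x + α) * x ^ (1 - α) := by ring
    have hxe : (0:ℝ) < x ^ (1 - α) := Real.rpow_pos_of_pos hx0 _
    rw [← mul_le_mul_iff_of_pos_right hxe]
    calc Real.Gamma x * x ^ α * x ^ (1 - α) = Real.Gamma x * x ^ (α + (1 - α)) := by
          rw [mul_assoc, ← Real.rpow_add hx0]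
      _ = x * Real.Gamma x := by norm_num [Real.rpow_one]; ring
      _ ≤ 2 * Real.Gamma (x + α) * x ^ (1 - α) := hchain

lemma aux_summable {α β ρ : ℝ} (c : ℝ) (hα : 0 < α) (hβ : 0 < β) (hρ : 0 < ρ) (hc : 0 ≤ c) :
    Summable (fun k : ℕ =>
      Real.Gamma (ρ + k) * c ^ k / (Real.Gamma (α * k + β) * (Nat.factorial k))) := by
  set e : ℝ := min α 1 with he_def
  have he : 0 < e := lt_min hα one_pos
  apply summable_of_ratio_norm_eventually_le (r := 1/2) (by norm_num)
  have htop : Tendsto (fun k : ℕ => α * k + β) atTop atTop := by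
    apply tendsto_atTop_add_const_right
    exact (tendsto_natCast_atTop_atTop).const_mul_atTop hα
  have h2 : ∀ᶠ k : ℕ in atTop, 2 ≤ α * k + β := htop.eventually_ge_atTop 2
  have hD : ∀ᶠ k : ℕ in atTop, 4 * c * (ρ + 1) ≤ (α * k + β) ^ e := by
    have := (tendsto_rpow_atTop he).comp htop
    exact this.eventually_ge_atTop _
  filter_upwards [h2, hD] with k hk2 hkD
  have hkx : (0:ℝ) ≤ (k:ℝ) := Nat.cast_nonneg k
  have hρk : (0:ℝ) < ρ + k := by linarith
  have hx : (0:ℝ) < α * k + β := by positivity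
  have hG1 : 0 < Real.Gamma (ρ + k) := Real.Gamma_pos_of_pos hρk
  have hG2 : 0 < Real.Gamma (α * k + β) := Real.Gamma_pos_of_pos hx
  have hG3 : 0 < Real.Gamma (α * k + β + α) := Real.Gamma_pos_of_pos (by linarith)
  have hfac : (0:ℝ) < (Nat.factorial k : ℝ) := by exact_mod_cast Nat.factorial_pos k
  have hxe : (0:ℝ) < (α * k + β) ^ e := Real.rpow_pos_of_pos hx e
  -- rewrite the (k+1) term
  have hcast1 : (ρ + ((k:ℕ)+1:ℕ) : ℝ) = (ρ + k) + 1 := by push_cast; ring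
  have hcast2 : (α * (((k:ℕ)+1:ℕ):ℝ) + β) = (α * k + β) + α := by push_cast; ring
  have hratio := gamma_ratio_lower hα hk2
  have hQ : Real.Gamma (ρ + (k+1:ℕ)) * c ^ (k+1) /
      (Real.Gamma (α * (k+1:ℕ) + β) * (Nat.factorial (k+1)))
      = ((ρ + k) * Real.Gamma (ρ + k)) * (c ^ k * c) /
        (Real.Gamma ((α * k + β) + α) * (((k:ℝ)+1) * (Nat.factorial k))) := by
    rw [hcast1, hcast2, Real.Gamma_add_one hρk.ne', Nat.factorial_succ]
    push_cast; ring
  rw [hQ, Real.norm_eq_abs, Real.norm_eq_abs, abs_of_nonneg (by positivity),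
    abs_of_nonneg (by positivity)]
  rw [div_mul_div_comm, one_mul, div_le_div_iff₀ (by positivity) (by positivity)]
  -- key: 2*c*(ρ+k) * (Γ x * k!) ≤ Γ(x+α)*((k+1)*k!) up to factors
  have hkey : 4 * (c * (ρ + (k:ℝ))) * Real.Gamma (α * k + β) ≤
      Real.Gamma ((α * k + β) + α) * (2 * ((k:ℝ) + 1)) := by
    have h1 : 4 * (c * (ρ + (k:ℝ))) ≤ (α * k + β) ^ e * ((k:ℝ) + 1) := by
      calc 4 * (c * (ρ + (k:ℝ))) ≤ (4 * c * (ρ + 1)) * ((k:ℝ) + 1) := by nlinarith [mul_nonneg hc (mul_nonneg hρ.le hkx), hc]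
        _ ≤ (α * k + β) ^ e * ((k:ℝ) + 1) := by
            apply mul_le_mul_of_nonneg_right hkD (by positivity)
    calc 4 * (c * (ρ + (k:ℝ))) * Real.Gamma (α * k + β)
        ≤ ((α * k + β) ^ e * ((k:ℝ) + 1)) * Real.Gamma (α * k + β) :=
          mul_le_mul_of_nonneg_right h1 hG2.le
      _ = (Real.Gamma (α * k + β) * (α * k + β) ^ e) * ((k:ℝ) + 1) := by ring
      _ ≤ (2 * Real.Gamma ((α * k + β) + α)) * ((k:ℝ) + 1) :=
          mul_le_mul_of_nonneg_right hratio (by positivity)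
      _ = Real.Gamma ((α * k + β) + α) * (2 * ((k:ℝ) + 1)) := by ring
  nlinarith [mul_le_mul_of_nonneg_right hkey
      (mul_nonneg (mul_nonneg hG1.le (pow_nonneg hc k)) hfac.le),
    mul_pos (mul_pos hG1 hfac) hG2, pow_nonneg hc k]

/-- The generalized (three-parameter, Prabhakar) Mittag-Leffler function. -/
noncomputable def mlE3 (α β ρ z : ℝ) : ℝ :=
  ∑' k : ℕ, Real.Gamma (ρ + k) * z ^ k / (Real.Gamma ρ * Real.Gamma (α * k + β) * (Nat.factorial k))

theorem mittagLeffler_antiderivative (α β ρ a t : ℝ) (hα : 0 < α) (hβ : 0 < β) (hρ : 0 < ρ)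
    (τ : ℝ) (hτ : 0 < τ) (hτt : τ < t) :
    HasDerivAt (fun σ : ℝ => -(t - σ) ^ β * mlE3 α (β + 1) ρ (-a * (t - σ) ^ α))
      ((t - τ) ^ (β - 1) * mlE3 α β ρ (-a * (t - τ) ^ α)) τ := by
  set L : ℝ := t - τ with hL_def
  have hL : 0 < L := by simp [hL_def]; linarith
  set s : Set ℝ := Set.Ioo (τ - L / 2) (τ + L / 2) with hs_def
  have hsopen : IsOpen s := isOpen_Ioo
  have hsconn : IsPreconnected s := isPreconnected_Ioo
  have hτs : τ ∈ s := by constructor <;> simp <;> linarith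
  have hmem : ∀ σ ∈ s, L / 2 < t - σ ∧ t - σ < 3 * L / 2 := by
    rintro σ ⟨h1, h2⟩
    constructor <;> [skip; skip] <;> simp only [hL_def] at * <;> linarith
  set M : ℝ := max 1 (3 * L / 2) with hM_def
  have hM1 : (1:ℝ) ≤ M := le_max_left _ _
  have hM0 : (0:ℝ) < M := lt_of_lt_of_le one_pos hM1
  set C0 : ℝ := (L / 2) ^ (β - 1) + (3 * L / 2) ^ (β - 1) with hC0_def
  have hC0 : 0 < C0 := by
    apply add_pos <;> apply Real.rpow_pos_of_pos <;> linarith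
  have hGρ : 0 < Real.Gamma ρ := Real.Gamma_pos_of_pos hρ
  -- per-k facts
  have hγpos : ∀ k : ℕ, 0 < α * k + β := fun k => by positivity
  have hGγ : ∀ k : ℕ, 0 < Real.Gamma (α * k + β) := fun k => Real.Gamma_pos_of_pos (hγpos k)
  have hGρk : ∀ k : ℕ, 0 < Real.Gamma (ρ + k) := fun k =>
    Real.Gamma_pos_of_pos (by positivity)
  have hfac : ∀ k : ℕ, (0:ℝ) < (Nat.factorial k : ℝ) := fun k => by
    exact_mod_cast Nat.factorial_pos k
  have hGγ1 : ∀ k : ℕ, Real.Gamma (α * k + (β + 1)) = (α * k + β) * Real.Gamma (α * k + β) := by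
    intro k
    rw [← add_assoc, Real.Gamma_add_one (hγpos k).ne']
  have hGγ1pos : ∀ k : ℕ, 0 < Real.Gamma (α * k + (β + 1)) := fun k => by
    rw [hGγ1 k]; exact mul_pos (hγpos k) (hGγ k)
  -- the series terms
  set g : ℕ → ℝ → ℝ := fun k σ =>
    -(Real.Gamma (ρ + k) * (-a) ^ k /
      (Real.Gamma ρ * Real.Gamma (α * k + (β + 1)) * (Nat.factorial k)) *
      (t - σ) ^ (α * k + β)) with hg_def
  set g' : ℕ → ℝ → ℝ := fun k σ =>
    Real.Gamma (ρ + k) * (-a) ^ k /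
      (Real.Gamma ρ * Real.Gamma (α * k + β) * (Nat.factorial k)) *
      (t - σ) ^ (α * k + β - 1) with hg'_def
  set u : ℕ → ℝ := fun k => C0 / Real.Gamma ρ *
      (Real.Gamma (ρ + k) * (|a| * M ^ α) ^ k /
        (Real.Gamma (α * k + β) * (Nat.factorial k))) with hu_def
  -- derivative of each term
  have hg : ∀ k : ℕ, ∀ σ ∈ s, HasDerivAt (g k) (g' k σ) σ := by
    intro k σ hσ
    have hts : 0 < t - σ := lt_trans (by linarith) (hmem σ hσ).1
    have hpow : HasDerivAt (fun σ : ℝ => (t - σ) ^ (α * k + β))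
        ((α * k + β) * (t - σ) ^ (α * k + β - 1) * (-1)) σ :=
      (Real.hasDerivAt_rpow_const (x := t - σ) (p := α * k + β)
        (Or.inl hts.ne')).comp σ ((hasDerivAt_id σ).const_sub t)
    have := (hpow.const_mul (Real.Gamma (ρ + k) * (-a) ^ k /
      (Real.Gamma ρ * Real.Gamma (α * k + (β + 1)) * (Nat.factorial k)))).neg
    convert this using 1
    · rfl
    · rfl
    · rfl
    rw [hg'_def, hGγ1 k]
    have hne1 : Real.Gamma ρ ≠ 0 := hGρ.ne'
    have hne2 : Real.Gamma (α * k + β) ≠ 0 := (hGγ k).ne'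
    have hne3 : (α * (k:ℝ) + β) ≠ 0 := (hγpos k).ne'
    have hne4 : ((Nat.factorial k : ℝ)) ≠ 0 := (hfac k).ne'
    set X := (t - σ) ^ (α * (k:ℝ) + β - 1) with hX
    set N := Real.Gamma (ρ + (k:ℝ)) * (-a) ^ k with hN
    field_simp
    rw [hN, hX]
    ring_nf
  -- bound on derivatives
  have hgb : ∀ k : ℕ, ∀ σ ∈ s, ‖g' k σ‖ ≤ u k := by
    intro k σ hσ
    obtain ⟨hm, hM'⟩ := hmem σ hσ
    have hts : 0 < t - σ := lt_trans (by linarith) hm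
    have htsM : t - σ ≤ M := le_trans hM'.le (le_max_right _ _)
    have hsplit : (t - σ) ^ (α * k + β - 1) = (t - σ) ^ (β - 1) * (t - σ) ^ (α * (k:ℝ)) := by
      rw [← Real.rpow_add hts]; ring_nf
    have hb1 : (t - σ) ^ (β - 1) ≤ C0 := by
      rw [hC0_def]
      rcases le_or_gt β 1 with hβ1 | hβ1
      · have : (t - σ) ^ (β - 1) ≤ (L / 2) ^ (β - 1) :=
          Real.rpow_le_rpow_of_nonpos (by linarith) hm.le (by linarith)
        have h2 : (0:ℝ) ≤ (3 * L / 2) ^ (β - 1) := Real.rpow_nonneg (by linarith) _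
        linarith
      · have : (t - σ) ^ (β - 1) ≤ (3 * L / 2) ^ (β - 1) :=
          Real.rpow_le_rpow hts.le hM'.le (by linarith)
        have h2 : (0:ℝ) ≤ (L / 2) ^ (β - 1) := Real.rpow_nonneg (by linarith) _
        linarith
    have hb2 : (t - σ) ^ (α * (k:ℝ)) ≤ (M ^ α) ^ k := by
      have h1 : (t - σ) ^ (α * (k:ℝ)) ≤ M ^ (α * (k:ℝ)) :=
        Real.rpow_le_rpow hts.le htsM (by positivity)
      have h2 : M ^ (α * (k:ℝ)) = (M ^ α) ^ k := by
        rw [Real.rpow_mul hM0.le, Real.rpow_natCast]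
      linarith [h2 ▸ h1]
    have habs : ‖g' k σ‖ = Real.Gamma (ρ + k) * |a| ^ k /
        (Real.Gamma ρ * Real.Gamma (α * k + β) * (Nat.factorial k)) *
        (t - σ) ^ (α * k + β - 1) := by
      rw [hg'_def]
      simp only [Real.norm_eq_abs, abs_mul, abs_div, abs_pow, abs_neg]
      rw [abs_of_pos (hGρk k), abs_of_pos hGρ, abs_of_pos (hGγ k),
        abs_of_pos (hfac k), abs_of_pos (Real.rpow_pos_of_pos hts _)]
    rw [habs, hsplit]
    have hcoef : (0:ℝ) ≤ Real.Gamma (ρ + k) * |a| ^ k /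
        (Real.Gamma ρ * Real.Gamma (α * k + β) * (Nat.factorial k)) := by positivity
    calc Real.Gamma (ρ + k) * |a| ^ k /
          (Real.Gamma ρ * Real.Gamma (α * k + β) * (Nat.factorial k)) *
          ((t - σ) ^ (β - 1) * (t - σ) ^ (α * (k:ℝ)))
        ≤ Real.Gamma (ρ + k) * |a| ^ k /
          (Real.Gamma ρ * Real.Gamma (α * k + β) * (Nat.factorial k)) *
          (C0 * (M ^ α) ^ k) := by
          apply mul_le_mul_of_nonneg_left _ hcoef
          exact mul_le_mul hb1 hb2 (Real.rpow_nonneg hts.le _) hC0.le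
      _ = u k := by
          rw [hu_def]
          simp only [mul_pow]
          field_simp
  -- summability of the bounds
  have hu : Summable u :=
    (aux_summable (|a| * M ^ α) hα hβ hρ (by positivity)).mul_left _
  -- summability of the series at τ
  have hLt : (0:ℝ) < t - τ := by linarith
  have hsum0 : Summable (fun k => g k τ) := by
    apply Summable.of_norm_bounded ((aux_summable (|a| * (t - τ) ^ α) hα
      (by linarith : (0:ℝ) < β + 1) hρ (by positivity)).mul_left
      ((t - τ) ^ β / Real.Gamma ρ))
    intro k
    rw [hg_def]
    simp only [Real.norm_eq_abs, abs_neg, abs_mul, abs_div, abs_pow]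
    rw [abs_of_pos (hGρk k), abs_of_pos hGρ, abs_of_pos (hGγ1pos k),
      abs_of_pos (hfac k), abs_of_pos (Real.rpow_pos_of_pos hLt _)]
    have h1 : (t - τ) ^ (α * (k:ℝ) + β) = (t - τ) ^ β * ((t - τ) ^ α) ^ k := by
      rw [Real.rpow_add hLt, Real.rpow_mul hLt.le, Real.rpow_natCast]; ring
    rw [h1, mul_pow]
    apply le_of_eq
    ring
  -- termwise differentiation
  have hder : HasDerivAt (fun σ => ∑' k, g k σ) (∑' k, g' k τ) τ :=
    hasDerivAt_tsum_of_isPreconnected hu hsopen hsconn hg hgb hτs hsum0 hτs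
  -- identify the derivative value
  have h1 : ∑' k, g' k τ = (t - τ) ^ (β - 1) * mlE3 α β ρ (-a * (t - τ) ^ α) := by
    rw [mlE3, ← tsum_mul_left]
    apply tsum_congr
    intro k
    simp only [hg'_def]
    have h2 : (-a * (t - τ) ^ α) ^ k = (-a) ^ k * ((t - τ) ^ α) ^ k := mul_pow _ _ _
    have h3 : ((t - τ) ^ α) ^ k = (t - τ) ^ (α * (k:ℝ)) := by
      rw [Real.rpow_mul hLt.le, Real.rpow_natCast]
    have h4 : (t - τ) ^ (α * (k:ℝ) + β - 1) = (t - τ) ^ (α * (k:ℝ)) * (t - τ) ^ (β - 1) := by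
      rw [← Real.rpow_add hLt]; ring_nf
    rw [h2, h3, h4]
    ring
  rw [← h1]
  -- the functions agree near τ
  apply hder.congr_of_eventuallyEq
  filter_upwards [hsopen.mem_nhds hτs] with σ hσ
  have hts : 0 < t - σ := lt_trans (by linarith) (hmem σ hσ).1
  rw [mlE3, neg_mul, ← tsum_mul_left, ← tsum_neg]
  apply tsum_congr
  intro k
  simp only [hg_def]
  have h2 : (-a * (t - σ) ^ α) ^ k = (-a) ^ k * ((t - σ) ^ α) ^ k := mul_pow _ _ _
  have h3 : ((t - σ) ^ α) ^ k = (t - σ) ^ (α * (k:ℝ)) := by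
    rw [Real.rpow_mul hts.le, Real.rpow_natCast]
  have h4 : (t - σ) ^ (α * (k:ℝ) + β) = (t - σ) ^ (α * (k:ℝ)) * (t - σ) ^ β := by
    rw [← Real.rpow_add hts]
  rw [h2, h3, h4]
  ring
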